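/- Let Y1, Y0, X be compact metric spaces with Borel σ-algebras, μ1X and μ0X Borel probability measures on Y1 × X and Y0 × X with the same X-marginal, m1 : Y0 × X → (d_θ × d_θ real matrices) continuous, m2 : Y1 × Y0 × X → ℝ^{d_θ} continuous, Θ ⊆ ℝ^{d_θ}, and suppose the matrix A := ∫ m1 dμ0X is invertible. Define s(q) := − inf over μ ∈ M(μ1X, μ0X) of ∫ qᵀ A⁻¹ m2(y1, y0, x) dμ. Then {θ ∈ Θ : there exists μ ∈ M(μ1X, μ0X) with ∫ (m1(y0, x) θ + m2(y1, y0, x)) dμ = 0} = {θ ∈ Θ : for every q in the unit sphere of ℝ^{d_θ}, ⟨q, θ⟩ ≤ s(q)} (Lemma B.2 of the appendix). -/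

import Mathlib

open MeasureTheory Topology Filter Set
open scoped ENNReal NNReal


open MeasureTheory
open scoped RealInnerProductSpace

/-- The set `M(μ1X, μ0X)` of probability measures on `Y1 × Y0 × X` whose projection on
`(Y1, X)` is `μ1X` and whose projection on `(Y0, X)` is `μ0X`. -/
def MSet {Y1 Y0 X : Type*} [MeasurableSpace Y1] [MeasurableSpace Y0] [MeasurableSpace X]
    (μ1X : Measure (Y1 × X)) (μ0X : Measure (Y0 × X)) :
    Set (Measure (Y1 × Y0 × X)) :=
  {μ | IsProbabilityMeasure μ ∧
    μ.map (fun p => (p.1, p.2.2)) = μ1X ∧ μ.map (fun p => (p.2.1, p.2.2)) = μ0X}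

namespace LemB2

lemma ext_prod {α β : Type*} [MeasurableSpace α] [MeasurableSpace β]
    {μ ν : Measure (α × β)} [IsFiniteMeasure μ] [IsFiniteMeasure ν]
    (h : ∀ s t, MeasurableSet s → MeasurableSet t → μ (s ×ˢ t) = ν (s ×ˢ t)) : μ = ν := by
  refine MeasureTheory.ext_of_generate_finite _ generateFrom_prod.symm isPiSystem_prod ?_ ?_
  · rintro u ⟨s, hs, t, ht, rfl⟩
    exact h s t hs ht
  · simpa using h univ univ MeasurableSet.univ MeasurableSet.univ

variable {Z : Type*} [MetricSpace Z] [CompactSpace Z] [MeasurableSpace Z] [BorelSpace Z]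

lemma integrable_cont {E : Type*} [NormedAddCommGroup E] {f : Z → E} (hf : Continuous f)
    (μ : Measure Z) [IsFiniteMeasure μ] : Integrable f μ :=
  hf.integrable_of_hasCompactSupport (HasCompactSupport.of_compactSpace f)

set_option linter.unusedSectionVars false

lemma sum_clamp (t δ : ℝ) (ht : 0 ≤ t) (hδ : 0 ≤ δ) :
    ∀ n : ℕ, ∑ i ∈ Finset.range n, min (max (t - i * δ) 0) δ = min t (n * δ)
  | 0 => by simp [min_eq_right ht]
  | (n + 1) => by
    rw [Finset.sum_range_succ, sum_clamp t δ ht hδ n]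
    push_cast
    rw [show ((n : ℝ) + 1) * δ = n * δ + δ from by ring]
    rcases le_total t ((n : ℝ) * δ) with h | h
    · rw [max_eq_right (by linarith), min_eq_left hδ, min_eq_left h,
        min_eq_left (by linarith : t ≤ (n : ℝ) * δ + δ)]
      ring
    · rw [min_eq_right h, max_eq_left (by linarith)]
      rcases le_total t ((n : ℝ) * δ + δ) with h3 | h3
      · rw [min_eq_left (by linarith), min_eq_left h3]
        ring
      · rw [min_eq_right (by linarith), min_eq_right h3]


section RMK

variable (Λ : C(Z, ℝ) →ₗ[ℝ] ℝ) (hΛ : ∀ f : C(Z, ℝ), (∀ x, 0 ≤ f x) → 0 ≤ Λ f)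

set_option linter.unusedSectionVars false

include hΛ in
lemma lam_mono {f g : C(Z, ℝ)} (h : ∀ x, f x ≤ g x) : Λ f ≤ Λ g := by
  have h0 : 0 ≤ Λ (g - f) := hΛ _ (fun x => by simp [sub_nonneg, h x])
  rw [map_sub] at h0; linarith

/-- Test functions for the Riesz content of a set `K`. -/
def testSet (K : Set Z) : Set ℝ :=
  (fun f : C(Z, ℝ) => Λ f) '' {f | (∀ x, 0 ≤ f x) ∧ ∀ x ∈ K, 1 ≤ f x}

lemma testSet_nonempty (K : Set Z) : (testSet Λ K).Nonempty :=
  ⟨Λ 1, ⟨1, ⟨fun _ => zero_le_one, fun _ _ => le_refl _⟩, rfl⟩⟩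

include hΛ in
lemma testSet_bddBelow (K : Set Z) :
    BddBelow (testSet Λ K) := by
  refine ⟨0, ?_⟩
  rintro r ⟨f, ⟨h0, _⟩, rfl⟩
  exact hΛ f h0

/-- The Riesz content (as a real number). -/
noncomputable def rcR (K : Set Z) : ℝ := sInf (testSet Λ K)

include hΛ

lemma rcR_nonneg (K : Set Z) : 0 ≤ rcR Λ K :=
  le_csInf (testSet_nonempty Λ K) (by rintro r ⟨f, ⟨h0, _⟩, rfl⟩; exact hΛ f h0)

lemma rcR_le {K : Set Z} {f : C(Z, ℝ)} (h0 : ∀ x, 0 ≤ f x) (h1 : ∀ x ∈ K, 1 ≤ f x) :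
    rcR Λ K ≤ Λ f :=
  csInf_le (testSet_bddBelow Λ hΛ K) ⟨f, ⟨h0, h1⟩, rfl⟩

lemma exists_test (K : Set Z) {ε : ℝ} (hε : 0 < ε) :
    ∃ f : C(Z, ℝ), (∀ x, 0 ≤ f x) ∧ (∀ x ∈ K, 1 ≤ f x) ∧ Λ f < rcR Λ K + ε := by
  obtain ⟨r, hr, hlt⟩ := exists_lt_of_csInf_lt (testSet_nonempty Λ K)
    (show rcR Λ K < rcR Λ K + ε by linarith)
  obtain ⟨f, ⟨h0, h1⟩, rfl⟩ := hr
  exact ⟨f, h0, h1, hlt⟩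

lemma rcR_mono {K₁ K₂ : Set Z} (h : K₁ ⊆ K₂) : rcR Λ K₁ ≤ rcR Λ K₂ := by
  refine csInf_le_csInf (testSet_bddBelow Λ hΛ K₁) (testSet_nonempty Λ K₂) ?_
  rintro r ⟨f, ⟨h0, h1⟩, rfl⟩
  exact ⟨f, ⟨h0, fun x hx => h1 x (h hx)⟩, rfl⟩

lemma rcR_union_le (K₁ K₂ : Set Z) : rcR Λ (K₁ ∪ K₂) ≤ rcR Λ K₁ + rcR Λ K₂ := by
  refine le_of_forall_pos_le_add (fun ε hε => ?_)
  obtain ⟨f₁, hf₁0, hf₁1, hf₁⟩ := exists_test Λ hΛ K₁ (half_pos hε)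
  obtain ⟨f₂, hf₂0, hf₂1, hf₂⟩ := exists_test Λ hΛ K₂ (half_pos hε)
  have : rcR Λ (K₁ ∪ K₂) ≤ Λ (f₁ + f₂) := by
    refine rcR_le Λ hΛ (fun x => by
        have := hf₁0 x; have := hf₂0 x
        simp only [ContinuousMap.add_apply]; linarith) ?_
    rintro x (hx | hx)
    · have := hf₂0 x; have := hf₁1 x hx; simp only [ContinuousMap.add_apply]; linarith
    · have := hf₁0 x; have := hf₂1 x hx; simp only [ContinuousMap.add_apply]; linarith
  rw [map_add] at this
  linarith

lemma rcR_union_disjoint {K₁ K₂ : Set Z} (h₁ : IsClosed K₁) (h₂ : IsClosed K₂)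
    (hd : Disjoint K₁ K₂) : rcR Λ K₁ + rcR Λ K₂ ≤ rcR Λ (K₁ ∪ K₂) := by
  refine le_of_forall_pos_le_add (fun ε hε => ?_)
  obtain ⟨f, hf0, hf1, hf⟩ := exists_test Λ hΛ (K₁ ∪ K₂) hε
  obtain ⟨g, hg0, hg1, hg⟩ := exists_continuous_zero_one_of_isClosed h₂ h₁ hd.symm
  have hgIcc : ∀ x, 0 ≤ g x ∧ g x ≤ 1 := fun x => ⟨(hg x).1, (hg x).2⟩
  have hA : rcR Λ K₁ ≤ Λ (f * g) := by
    refine rcR_le Λ hΛ (fun x => mul_nonneg (hf0 x) (hgIcc x).1) (fun x hx => ?_)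
    have e1 : g x = 1 := hg1 hx
    have e2 := hf1 x (Or.inl hx)
    simp only [ContinuousMap.mul_apply, e1, mul_one]
    linarith
  have hB : rcR Λ K₂ ≤ Λ (f * (1 - g)) := by
    refine rcR_le Λ hΛ (fun x => mul_nonneg (hf0 x) (by simpa using (hgIcc x).2)) (fun x hx => ?_)
    have e1 : g x = 0 := hg0 hx
    have e2 := hf1 x (Or.inr hx)
    simp only [ContinuousMap.mul_apply, ContinuousMap.sub_apply, ContinuousMap.one_apply, e1]
    linarith
  have hsum : Λ (f * g) + Λ (f * (1 - g)) = Λ f := by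
    rw [← map_add]; congr 1; ext x; simp [ContinuousMap.mul_apply]; ring
  linarith

/-- The Riesz content associated to a positive linear functional, as a `Content`. -/
noncomputable def rieszCnt : Content Z where
  toFun K := ⟨rcR Λ K, rcR_nonneg Λ hΛ K⟩
  mono' K₁ K₂ h := by
    exact rcR_mono Λ hΛ h
  sup_disjoint' K₁ K₂ hd hc₁ hc₂ := by
    have h1 : (↑(K₁ ⊔ K₂) : Set Z) = ↑K₁ ∪ ↑K₂ := rfl
    refine NNReal.coe_injective ?_
    simp only [NNReal.coe_add, NNReal.coe_mk, h1]
    exact le_antisymm (rcR_union_le Λ hΛ _ _) (rcR_union_disjoint Λ hΛ hc₁ hc₂ hd)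
  sup_le' K₁ K₂ := by
    have h1 : (↑(K₁ ⊔ K₂) : Set Z) = ↑K₁ ∪ ↑K₂ := rfl
    exact rcR_union_le Λ hΛ (K₁ : Set Z) K₂

/-- The measure produced by the Riesz construction. -/
noncomputable def rmkMeasure : Measure Z := (rieszCnt Λ hΛ).measure

lemma rcR_univ : rcR Λ (univ : Set Z) = Λ 1 := by
  refine le_antisymm (rcR_le Λ hΛ (fun _ => zero_le_one) (fun _ _ => le_refl _)) ?_
  refine le_csInf (testSet_nonempty Λ _) ?_
  rintro r ⟨f, ⟨h0, h1⟩, rfl⟩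
  exact lam_mono Λ hΛ (fun x => h1 x trivial)

lemma rmkMeasure_univ : rmkMeasure Λ hΛ univ = ENNReal.ofReal (Λ 1) := by
  rw [rmkMeasure, Content.measure_apply _ MeasurableSet.univ]
  have h1 : (rieszCnt Λ hΛ).outerMeasure univ = (rieszCnt Λ hΛ).innerContent ⟨univ, isOpen_univ⟩ :=
    Content.outerMeasure_opens _ ⟨univ, isOpen_univ⟩
  rw [h1, Content.innerContent_of_isCompact _ isCompact_univ isOpen_univ]
  have : ((rieszCnt Λ hΛ) ⟨univ, isCompact_univ⟩ : ℝ≥0∞) = ENNReal.ofReal (rcR Λ univ) :=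
    (ENNReal.ofReal_eq_coe_nnreal (rcR_nonneg Λ hΛ univ)).symm
  rw [this, rcR_univ Λ hΛ]

instance : IsFiniteMeasure (rmkMeasure Λ hΛ) := by
  constructor
  rw [rmkMeasure_univ Λ hΛ]
  exact ENNReal.ofReal_lt_top

lemma rmkMeasure_open_le {U : Set Z} (hU : IsOpen U) {g : C(Z, ℝ)} (hg0 : ∀ x, 0 ≤ g x)
    (hg1 : ∀ x ∈ U, 1 ≤ g x) : rmkMeasure Λ hΛ U ≤ ENNReal.ofReal (Λ g) := by
  rw [rmkMeasure, Content.measure_apply _ hU.measurableSet,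
    Content.outerMeasure_of_isOpen _ U hU]
  rw [show (⟨U, hU⟩ : TopologicalSpace.Opens Z) = ⟨U, hU⟩ from rfl, Content.innerContent]
  refine iSup_le fun K => iSup_le fun hK => ?_
  have h1 : ((rieszCnt Λ hΛ) K : ℝ≥0∞) = ENNReal.ofReal (rcR Λ K) :=
    (ENNReal.ofReal_eq_coe_nnreal _).symm
  rw [h1]
  exact ENNReal.ofReal_le_ofReal (rcR_le Λ hΛ hg0 (fun x hx => hg1 x (hK hx)))


lemma integral_le_lam (f : C(Z, ℝ)) (hf : ∀ x, 0 ≤ f x) :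
    ∫ x, f x ∂(rmkMeasure Λ hΛ) ≤ Λ f := by
  set μ := rmkMeasure Λ hΛ with hμdef
  haveI : IsFiniteMeasure μ := by rw [hμdef]; infer_instance
  have key : ∀ n : ℕ, 0 < n → ∫ x, f x ∂μ ≤ Λ f + (‖f‖ + 1) / n * (μ univ).toReal := by
    intro n hn
    obtain ⟨m, rfl⟩ : ∃ m, n = m + 1 := ⟨n - 1, (Nat.succ_pred_eq_of_pos hn).symm⟩
    set δ : ℝ := (‖f‖ + 1) / (m + 1) with hδdef
    have hnen : (0 : ℝ) < (m : ℝ) + 1 := by positivity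
    have hδ : 0 < δ := by
      apply div_pos _ hnen
      positivity
    set g : ℕ → C(Z, ℝ) := fun i =>
      ⟨fun x => min (max (f x - i * δ) 0) δ,
        ((f.continuous.sub continuous_const).max continuous_const).min continuous_const⟩ with hgdef
    have hg_apply : ∀ i x, g i x = min (max (f x - i * δ) 0) δ := fun i x => rfl
    have hg0 : ∀ i x, 0 ≤ g i x := fun i x => le_min (le_max_right _ _) hδ.le
    have hgδ : ∀ i x, g i x ≤ δ := fun i x => min_le_right _ _
    have hsum : ∀ (k : ℕ) (x : Z), ∑ i ∈ Finset.range k, g i x = min (f x) (k * δ) :=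
      fun k x => sum_clamp (f x) δ (hf x) hδ.le k
    have hfx : ∀ x, f x = ∑ i ∈ Finset.range (m + 1), g i x := by
      intro x
      rw [hsum (m + 1) x, min_eq_left]
      have h1 : f x ≤ ‖f‖ := by
        have := f.norm_coe_le_norm x
        rw [Real.norm_eq_abs] at this
        exact (le_abs_self _).trans this
      have h2 : ((m : ℝ) + 1) * δ = ‖f‖ + 1 := by
        rw [hδdef]; field_simp
      push_cast
      rw [h2]; linarith
    have hUopen : ∀ c : ℝ, IsOpen {x : Z | c < f x} := fun c =>
      isOpen_lt continuous_const f.continuous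
    have hint : ∀ i : ℕ, ∫ x, g i x ∂μ ≤ δ * (μ {x : Z | (i : ℝ) * δ < f x}).toReal := by
      intro i
      have hmono : ∀ x, g i x ≤ Set.indicator {x : Z | (i : ℝ) * δ < f x} (fun _ => δ) x := by
        intro x
        by_cases hx : x ∈ {x : Z | (i : ℝ) * δ < f x}
        · rw [Set.indicator_of_mem hx]; exact hgδ i x
        · rw [Set.indicator_of_notMem hx]
          simp only [mem_setOf_eq, not_lt] at hx
          rw [hg_apply, max_eq_right (by linarith), min_eq_left hδ.le]
      calc ∫ x, g i x ∂μ
          ≤ ∫ x, Set.indicator {x : Z | (i : ℝ) * δ < f x} (fun _ => δ) x ∂μ :=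
            integral_mono (integrable_cont (g i).continuous μ)
              ((integrable_const δ).indicator (hUopen _).measurableSet) hmono
        _ = δ * (μ {x : Z | (i : ℝ) * δ < f x}).toReal := by
            rw [integral_indicator_const _ (hUopen _).measurableSet]
            simp [mul_comm, Measure.real]
    have hmeasU : ∀ i : ℕ, δ * (μ {x : Z | ((i : ℝ) + 1) * δ < f x}).toReal ≤ Λ (g i) := by
      intro i
      have hΛg : 0 ≤ Λ (g i) := hΛ _ (hg0 i)
      have h1 : μ {x : Z | ((i : ℝ) + 1) * δ < f x} ≤ ENNReal.ofReal (δ⁻¹ * Λ (g i)) := by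
        have := rmkMeasure_open_le Λ hΛ (hUopen (((i : ℝ) + 1) * δ))
          (g := δ⁻¹ • g i) (fun x => by
            simp only [ContinuousMap.smul_apply, smul_eq_mul]
            exact mul_nonneg (by positivity) (hg0 i x))
          (fun x hx => by
            simp only [mem_setOf_eq] at hx
            have hgx : g i x = δ := by
              rw [hg_apply, max_eq_left (by nlinarith), min_eq_right (by nlinarith)]
            simp only [ContinuousMap.smul_apply, smul_eq_mul, hgx]
            rw [inv_mul_cancel₀ hδ.ne']
          )
        rw [LinearMap.map_smul, smul_eq_mul] at this
        rw [hμdef]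
        exact this
      have h2 : (μ {x : Z | ((i : ℝ) + 1) * δ < f x}).toReal ≤ δ⁻¹ * Λ (g i) := by
        refine le_trans (ENNReal.toReal_mono ENNReal.ofReal_ne_top h1) ?_
        rw [ENNReal.toReal_ofReal (by positivity)]
      calc δ * (μ {x : Z | ((i : ℝ) + 1) * δ < f x}).toReal ≤ δ * (δ⁻¹ * Λ (g i)) := by
            exact mul_le_mul_of_nonneg_left h2 hδ.le
        _ = Λ (g i) := by field_simp
    -- put everything together
    have hint_f : ∫ x, f x ∂μ = ∑ i ∈ Finset.range (m + 1), ∫ x, g i x ∂μ := by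
      rw [← integral_finset_sum _ (fun i _ => integrable_cont (g i).continuous μ)]
      exact integral_congr_ae (Filter.Eventually.of_forall (fun x => hfx x))
    have hsum_le : ∑ i ∈ Finset.range m, Λ (g i) ≤ Λ f := by
      rw [← map_sum]
      refine lam_mono Λ hΛ (fun x => ?_)
      have : (∑ i ∈ Finset.range m, g i) x = ∑ i ∈ Finset.range m, g i x := by
        simp
      rw [this, hsum m x]
      exact min_le_left _ _
    have hμu : ∀ i : ℕ, (μ {x : Z | (i : ℝ) * δ < f x}).toReal ≤ (μ univ).toReal :=
      fun i => ENNReal.toReal_mono (measure_ne_top μ _) (measure_mono (subset_univ _))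
    calc ∫ x, f x ∂μ = ∑ i ∈ Finset.range (m + 1), ∫ x, g i x ∂μ := hint_f
      _ = (∑ i ∈ Finset.range m, ∫ x, g (i + 1) x ∂μ) + ∫ x, g 0 x ∂μ :=
          Finset.sum_range_succ' _ m
      _ ≤ (∑ i ∈ Finset.range m, Λ (g i)) + δ * (μ univ).toReal := by
          refine add_le_add (Finset.sum_le_sum (fun i _ => ?_)) ?_
          · refine (hint (i + 1)).trans ?_
            refine le_trans (le_of_eq ?_) (hmeasU i)
            push_cast
            ring_nf
          · refine (hint 0).trans ?_
            have := hμu 0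
            nlinarith [hμu 0]
      _ ≤ Λ f + (‖f‖ + 1) / (m + 1 : ℕ) * (μ univ).toReal := by
          have h3 : ((m : ℝ) + 1) = ((m + 1 : ℕ) : ℝ) := by push_cast; ring
          refine add_le_add hsum_le (le_of_eq ?_)
          rw [hδdef, h3]
  refine le_of_forall_pos_le_add (fun ε hε => ?_)
  set c := (μ univ).toReal with hc
  have hc0 : 0 ≤ c := ENNReal.toReal_nonneg
  obtain ⟨n, hn⟩ := exists_nat_gt (max 1 ((‖f‖ + 1) * c / ε))
  have hn1 : (1 : ℝ) < n := lt_of_le_of_lt (le_max_left _ _) hn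
  have hn0 : (0 : ℝ) < n := by linarith
  have hnn : 0 < n := by exact_mod_cast hn0
  refine (key n hnn).trans ?_
  have h4 : (‖f‖ + 1) * c / ε < n := lt_of_le_of_lt (le_max_right _ _) hn
  have h5 : (‖f‖ + 1) / n * c < ε := by
    rw [div_mul_eq_mul_div, div_lt_iff₀ hn0]
    have := (div_lt_iff₀ hε).mp h4
    linarith
  linarith

lemma rmk_measureReal_univ : (rmkMeasure Λ hΛ univ).toReal = Λ 1 := by
  rw [rmkMeasure_univ Λ hΛ]
  exact ENNReal.toReal_ofReal (hΛ 1 fun x => zero_le_one)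

lemma rmk_integral_le (f : C(Z, ℝ)) : ∫ x, f x ∂(rmkMeasure Λ hΛ) ≤ Λ f := by
  set μ := rmkMeasure Λ hΛ with hμdef
  haveI : IsFiniteMeasure μ := by rw [hμdef]; infer_instance
  have h0 : ∀ x, 0 ≤ (f + ContinuousMap.const Z ‖f‖) x := by
    intro x
    simp only [ContinuousMap.add_apply, ContinuousMap.const_apply]
    have h1 := f.norm_coe_le_norm x
    rw [Real.norm_eq_abs] at h1
    have := neg_abs_le (f x)
    linarith
  have h := integral_le_lam Λ hΛ _ h0
  have hΛc : Λ (f + ContinuousMap.const Z ‖f‖) = Λ f + ‖f‖ * Λ 1 := by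
    rw [map_add]
    congr 1
    rw [show ContinuousMap.const Z ‖f‖ = ‖f‖ • (1 : C(Z, ℝ)) from by ext x; simp]
    rw [_root_.map_smul, smul_eq_mul]
  have hInt : ∫ x, (f + ContinuousMap.const Z ‖f‖) x ∂μ
      = ∫ x, f x ∂μ + ‖f‖ * (μ univ).toReal := by
    simp only [ContinuousMap.add_apply, ContinuousMap.const_apply]
    rw [integral_add (integrable_cont f.continuous μ) (integrable_const _), integral_const]
    simp [smul_eq_mul, mul_comm, Measure.real]
  rw [hInt, hΛc] at h
  have huniv : (μ univ).toReal = Λ 1 := rmk_measureReal_univ Λ hΛ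
  rw [huniv] at h
  linarith

theorem rmk_integral_eq (f : C(Z, ℝ)) : ∫ x, f x ∂(rmkMeasure Λ hΛ) = Λ f := by
  refine le_antisymm (rmk_integral_le Λ hΛ f) ?_
  have h := rmk_integral_le Λ hΛ (-f)
  rw [map_neg] at h
  have h2 : ∫ x, (-f) x ∂(rmkMeasure Λ hΛ) = -∫ x, f x ∂(rmkMeasure Λ hΛ) := by
    simp only [ContinuousMap.neg_apply]
    rw [integral_neg]
  rw [h2] at h
  linarith

/-- Riesz–Markov–Kakutani for compact metric spaces. -/
theorem exists_rmk :
    ∃ μ : Measure Z, IsFiniteMeasure μ ∧ ∀ f : C(Z, ℝ), ∫ x, f x ∂μ = Λ f :=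
  ⟨rmkMeasure Λ hΛ, inferInstance, rmk_integral_eq Λ hΛ⟩


end RMK

section Limits

lemma measure_ext_of_integral {μ ν : Measure Z} [IsFiniteMeasure μ] [IsFiniteMeasure ν]
    (h : ∀ f : C(Z, ℝ), ∫ x, f x ∂μ = ∫ x, f x ∂ν) : μ = ν := by
  apply MeasureTheory.ext_of_forall_lintegral_eq_of_IsFiniteMeasure
  intro f
  have hc : Continuous fun x => ((f x : ℝ)) := NNReal.continuous_coe.comp f.continuous
  have hr : ∀ (ρ : Measure Z), IsFiniteMeasure ρ →
      ∫⁻ x, (f x : ℝ≥0∞) ∂ρ = ENNReal.ofReal (∫ x, ((f x : ℝ)) ∂ρ) := by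
    intro ρ hρ
    rw [ofReal_integral_eq_lintegral_ofReal (integrable_cont hc ρ)
      (Filter.Eventually.of_forall fun x => (f x).2)]
    simp_rw [ENNReal.ofReal_coe_nnreal]
  rw [hr μ inferInstance, hr ν inferInstance]
  congr 1
  exact h ⟨fun x => (f x : ℝ), hc⟩

lemma exists_ultrafilter_limit_measure (μs : ℕ → Measure Z)
    (hμs : ∀ n, IsProbabilityMeasure (μs n)) (U : Ultrafilter ℕ) :
    ∃ μ : Measure Z, IsProbabilityMeasure μ ∧
      ∀ f : C(Z, ℝ), Tendsto (fun n => ∫ x, f x ∂(μs n)) (U : Filter ℕ) (𝓝 (∫ x, f x ∂μ)) := by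
  have hbd : ∀ (f : C(Z, ℝ)) (n : ℕ), ∫ x, f x ∂(μs n) ∈ Icc (-‖f‖) ‖f‖ := by
    intro f n
    have := hμs n
    have h1 : ‖∫ x, f x ∂(μs n)‖ ≤ ‖f‖ * ((μs n) univ).toReal :=
      norm_integral_le_of_norm_le_const (Filter.Eventually.of_forall fun x => f.norm_coe_le_norm x)
    rw [measure_univ, ENNReal.toReal_one, mul_one, Real.norm_eq_abs] at h1
    exact abs_le.mp h1
  have hex : ∀ f : C(Z, ℝ), ∃ Lf : ℝ,
      Tendsto (fun n => ∫ x, f x ∂(μs n)) (U : Filter ℕ) (𝓝 Lf) := by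
    intro f
    obtain ⟨Lf, _, hLf⟩ := (isCompact_Icc (a := -‖f‖) (b := ‖f‖)).ultrafilter_le_nhds
      (U.map fun n => ∫ x, f x ∂(μs n)) (by
        rw [Ultrafilter.coe_map, Filter.le_principal_iff, Filter.mem_map]
        exact Filter.univ_mem' fun n => hbd f n)
    exact ⟨Lf, by rwa [Ultrafilter.coe_map] at hLf⟩
  choose L hL using hex
  have hadd : ∀ f g : C(Z, ℝ), L (f + g) = L f + L g := by
    intro f g
    refine tendsto_nhds_unique (hL (f + g)) (((hL f).add (hL g)).congr fun n => ?_)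
    simp only [ContinuousMap.add_apply]
    rw [integral_add (integrable_cont f.continuous _) (integrable_cont g.continuous _)]
  have hsmul : ∀ (c : ℝ) (f : C(Z, ℝ)), L (c • f) = c * L f := by
    intro c f
    refine tendsto_nhds_unique (hL (c • f)) (((hL f).const_mul c).congr fun n => ?_)
    simp only [ContinuousMap.smul_apply, smul_eq_mul]
    rw [integral_const_mul]
  set Λ : C(Z, ℝ) →ₗ[ℝ] ℝ :=
    { toFun := L, map_add' := hadd, map_smul' := fun c f => by simp [hsmul c f] } with hΛdef
  have hΛpos : ∀ f : C(Z, ℝ), (∀ x, 0 ≤ f x) → 0 ≤ Λ f := fun f hf =>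
    ge_of_tendsto (hL f) (Filter.Eventually.of_forall fun n =>
      integral_nonneg fun x => hf x)
  obtain ⟨μ, hfin, hint⟩ := exists_rmk Λ hΛpos
  have hone : Λ 1 = 1 := by
    refine tendsto_nhds_unique (hL 1) ?_
    refine tendsto_const_nhds.congr fun n => ?_
    have := hμs n
    simp only [ContinuousMap.one_apply]
    rw [integral_const, probReal_univ, one_smul]
  haveI hμuniv : IsProbabilityMeasure μ := by
    constructor
    have h1 : ∫ x, (1 : C(Z, ℝ)) x ∂μ = Λ 1 := hint 1
    simp only [ContinuousMap.one_apply] at h1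
    rw [integral_const, smul_eq_mul, mul_one, hone] at h1
    have h2 := measure_ne_top μ univ
    rw [← ENNReal.toReal_one] at h1
    exact (ENNReal.toReal_eq_toReal_iff' h2 ENNReal.one_ne_top).mp h1
  exact ⟨μ, hμuniv, fun f => by rw [hint f]; exact hL f⟩

end Limits

section Glue
open ProbabilityTheory

variable {Y1 Y0 X : Type*}
  [MetricSpace Y1] [CompactSpace Y1] [MeasurableSpace Y1] [BorelSpace Y1]
  [MetricSpace Y0] [CompactSpace Y0] [MeasurableSpace Y0] [BorelSpace Y0]
  [MetricSpace X] [CompactSpace X] [MeasurableSpace X] [BorelSpace X]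

lemma exists_coupling (μ1X : Measure (Y1 × X)) (μ0X : Measure (Y0 × X))
    [IsProbabilityMeasure μ1X] [IsProbabilityMeasure μ0X]
    (hmarg : μ1X.map Prod.snd = μ0X.map Prod.snd) :
    (MSet μ1X μ0X).Nonempty := by
  haveI : Nonempty (Y1 × X) := by
    by_contra h
    rw [not_nonempty_iff] at h
    have h1 := measure_univ (μ := μ1X)
    rw [Set.univ_eq_empty_iff.mpr h, measure_empty] at h1
    exact zero_ne_one h1
  haveI : Nonempty (Y0 × X) := by
    by_contra h
    rw [not_nonempty_iff] at h
    have h1 := measure_univ (μ := μ0X)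
    rw [Set.univ_eq_empty_iff.mpr h, measure_empty] at h1
    exact zero_ne_one h1
  haveI : Nonempty Y1 := ⟨(Classical.arbitrary (Y1 × X)).1⟩
  haveI : Nonempty Y0 := ⟨(Classical.arbitrary (Y0 × X)).1⟩
  set ν : Measure X := μ0X.map Prod.snd with hν
  haveI : IsProbabilityMeasure ν := Measure.isProbabilityMeasure_map measurable_snd.aemeasurable
  set ρ1 : Measure (X × Y1) := μ1X.map Prod.swap with hρ1def
  set ρ0 : Measure (X × Y0) := μ0X.map Prod.swap with hρ0def
  haveI : IsProbabilityMeasure ρ1 := Measure.isProbabilityMeasure_map measurable_swap.aemeasurable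
  haveI : IsProbabilityMeasure ρ0 := Measure.isProbabilityMeasure_map measurable_swap.aemeasurable
  have hρ1fst : ρ1.fst = ν := by
    rw [hρ1def, Measure.fst, Measure.map_map measurable_fst measurable_swap]
    rw [show (Prod.fst ∘ Prod.swap : Y1 × X → X) = Prod.snd from rfl, hmarg, hν]
  have hρ0fst : ρ0.fst = ν := by
    rw [hρ0def, Measure.fst, Measure.map_map measurable_fst measurable_swap]
    rw [show (Prod.fst ∘ Prod.swap : Y0 × X → X) = Prod.snd from rfl, hν]
  set κ1 := ρ1.condKernel with hκ1
  set κ0 := ρ0.condKernel with hκ0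
  have hρ1' : ν.compProd κ1 = ρ1 := by rw [← hρ1fst, hκ1]; exact ρ1.disintegrate _
  have hρ0' : ν.compProd κ0 = ρ0 := by rw [← hρ0fst, hκ0]; exact ρ0.disintegrate _
  set π : Measure (X × (Y1 × Y0)) := ν.compProd (κ1.prod κ0) with hπ
  haveI : IsProbabilityMeasure π := by rw [hπ]; infer_instance
  have hmF : Measurable (fun p : X × (Y1 × Y0) => (p.2.1, p.2.2, p.1)) := by fun_prop
  refine ⟨π.map (fun p => (p.2.1, p.2.2, p.1)), ?_, ?_, ?_⟩
  · exact Measure.isProbabilityMeasure_map hmF.aemeasurable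
  · rw [Measure.map_map (by fun_prop) hmF]
    have he : ((fun q : Y1 × Y0 × X => (q.1, q.2.2)) ∘ (fun p : X × (Y1 × Y0) => (p.2.1, p.2.2, p.1)))
        = (fun p : X × (Y1 × Y0) => (p.2.1, p.1)) := rfl
    rw [he]
    refine ext_prod (fun s t hs ht => ?_)
    rw [Measure.map_apply (by fun_prop) (hs.prod ht)]
    have hpre : (fun p : X × (Y1 × Y0) => (p.2.1, p.1)) ⁻¹' (s ×ˢ t) = t ×ˢ (s ×ˢ univ) := by
      ext p; simp [Set.mem_prod, and_comm]
    rw [hpre, hπ, Measure.compProd_apply_prod ht (hs.prod MeasurableSet.univ)]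
    have h1 : μ1X (s ×ˢ t) = ρ1 (t ×ˢ s) := by
      rw [hρ1def, Measure.map_apply measurable_swap (ht.prod hs), Set.preimage_swap_prod]
    rw [h1, ← hρ1', Measure.compProd_apply_prod ht hs]
    refine lintegral_congr (fun x => ?_)
    rw [Kernel.prod_apply, Measure.prod_prod, measure_univ, mul_one]
  · rw [Measure.map_map (by fun_prop) hmF]
    have he : ((fun q : Y1 × Y0 × X => (q.2.1, q.2.2)) ∘ (fun p : X × (Y1 × Y0) => (p.2.1, p.2.2, p.1)))
        = (fun p : X × (Y1 × Y0) => (p.2.2, p.1)) := rfl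
    rw [he]
    refine ext_prod (fun s t hs ht => ?_)
    rw [Measure.map_apply (by fun_prop) (hs.prod ht)]
    have hpre : (fun p : X × (Y1 × Y0) => (p.2.2, p.1)) ⁻¹' (s ×ˢ t) = t ×ˢ (univ ×ˢ s) := by
      ext p; simp [Set.mem_prod, and_comm]
    rw [hpre, hπ, Measure.compProd_apply_prod ht (MeasurableSet.univ.prod hs)]
    have h1 : μ0X (s ×ˢ t) = ρ0 (t ×ˢ s) := by
      rw [hρ0def, Measure.map_apply measurable_swap (ht.prod hs), Set.preimage_swap_prod]
    rw [h1, ← hρ0', Measure.compProd_apply_prod ht hs]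
    refine lintegral_congr (fun x => ?_)
    rw [Kernel.prod_apply, Measure.prod_prod, measure_univ, one_mul]

end Glue

end LemB2

/-- Lemma B.2: when `k = d_θ` and `A := ∫ m1 dμ0X` is invertible (with inverse `Ainv`), the
identified set can be rewritten as
`{θ ∈ Θ : ⟨q, θ⟩ ≤ s(q) for all q on the unit sphere}` where
`s(q) = − inf_{μ ∈ M(μ1X,μ0X)} ∫ qᵀ A⁻¹ m2 dμ`. -/
theorem identified_set_eq_support_constraints
    {Y1 Y0 X : Type*}
    [MetricSpace Y1] [CompactSpace Y1] [MeasurableSpace Y1] [BorelSpace Y1]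
    [MetricSpace Y0] [CompactSpace Y0] [MeasurableSpace Y0] [BorelSpace Y0]
    [MetricSpace X] [CompactSpace X] [MeasurableSpace X] [BorelSpace X]
    (μ1X : Measure (Y1 × X)) (μ0X : Measure (Y0 × X))
    [IsProbabilityMeasure μ1X] [IsProbabilityMeasure μ0X]
    (hmarg : μ1X.map Prod.snd = μ0X.map Prod.snd)
    {dθ : ℕ}
    (m1 : Y0 × X → (EuclideanSpace ℝ (Fin dθ) →L[ℝ] EuclideanSpace ℝ (Fin dθ)))
    (hm1 : Continuous m1)
    (m2 : Y1 × Y0 × X → EuclideanSpace ℝ (Fin dθ)) (hm2 : Continuous m2)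
    (Θ : Set (EuclideanSpace ℝ (Fin dθ)))
    (Ainv : EuclideanSpace ℝ (Fin dθ) →L[ℝ] EuclideanSpace ℝ (Fin dθ))
    (hAinv₁ : ∀ v, Ainv ((∫ q, m1 q ∂μ0X) v) = v)
    (hAinv₂ : ∀ v, (∫ q, m1 q ∂μ0X) (Ainv v) = v) :
    {θ ∈ Θ | ∃ μ ∈ MSet μ1X μ0X, ∫ p, (m1 (p.2.1, p.2.2)) θ + m2 p ∂μ = 0} =
      {θ ∈ Θ | ∀ q : EuclideanSpace ℝ (Fin dθ), ‖q‖ = 1 →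
        ⟪q, θ⟫ ≤ - sInf {r : ℝ | ∃ μ ∈ MSet μ1X μ0X, r = ∫ p, ⟪q, Ainv (m2 p)⟫ ∂μ}} := by
  classical
  have hM : (MSet μ1X μ0X).Nonempty := LemB2.exists_coupling μ1X μ0X hmarg
  set M := MSet μ1X μ0X with hMdef
  set fC : C(Y1 × Y0 × X, EuclideanSpace ℝ (Fin dθ)) := ⟨m2, hm2⟩ with hfC
  set F : Measure (Y1 × Y0 × X) → EuclideanSpace ℝ (Fin dθ) :=
    fun μ => -Ainv (∫ p, m2 p ∂μ) with hFdef
  set S : Set (EuclideanSpace ℝ (Fin dθ)) := F '' M with hSdef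
  have hSne : S.Nonempty := hM.image F
  have hIm2 : ∀ μ : Measure (Y1 × Y0 × X), IsProbabilityMeasure μ → Integrable m2 μ :=
    fun μ h => by haveI := h; exact LemB2.integrable_cont hm2 μ
  have hIb : ∀ μ ∈ M, ‖∫ p, m2 p ∂μ‖ ≤ ‖fC‖ := by
    intro μ hμ
    haveI := hμ.1
    have h1 := norm_integral_le_of_norm_le_const (μ := μ) (f := m2) (C := ‖fC‖)
      (Filter.Eventually.of_forall fun p => fC.norm_coe_le_norm p)
    rwa [probReal_univ, mul_one] at h1
  have hFb : ∀ s ∈ S, ‖s‖ ≤ ‖Ainv‖ * ‖fC‖ := by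
    rintro s ⟨μ, hμ, rfl⟩
    simp only [hFdef, norm_neg]
    calc ‖Ainv (∫ p, m2 p ∂μ)‖ ≤ ‖Ainv‖ * ‖∫ p, m2 p ∂μ‖ := Ainv.le_opNorm _
      _ ≤ ‖Ainv‖ * ‖fC‖ := mul_le_mul_of_nonneg_left (hIb μ hμ) (norm_nonneg _)
  -- characterization of the moment condition
  have hmem : ∀ μ ∈ M, ∀ θ : EuclideanSpace ℝ (Fin dθ),
      (∫ p, (m1 (p.2.1, p.2.2)) θ + m2 p ∂μ = 0) ↔ θ = F μ := by
    intro μ hμ θ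
    haveI := hμ.1
    have hg : Continuous fun y : Y0 × X => (m1 y) θ := by fun_prop
    have hsplit : ∫ p, (m1 (p.2.1, p.2.2)) θ + m2 p ∂μ
        = (∫ q, m1 q ∂μ0X) θ + ∫ p, m2 p ∂μ := by
      rw [integral_add (LemB2.integrable_cont (by fun_prop) μ) (hIm2 μ inferInstance)]
      congr 1
      have h1 : ∫ p : Y1 × Y0 × X, (m1 (p.2.1, p.2.2)) θ ∂μ = ∫ y, (m1 y) θ ∂μ0X := by
        rw [← hμ.2.2, integral_map
          (by fun_prop : Measurable fun p : Y1 × Y0 × X => (p.2.1, p.2.2)).aemeasurable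
          hg.aestronglyMeasurable]
      rw [h1, ContinuousLinearMap.integral_apply (LemB2.integrable_cont hm1 μ0X) θ]
    constructor
    · intro h0
      rw [hsplit] at h0
      have h2 := congrArg Ainv h0
      rw [map_add, hAinv₁ θ, map_zero] at h2
      simp only [hFdef]
      exact eq_neg_of_add_eq_zero_left h2
    · intro hθ
      rw [hsplit, hθ]
      simp only [hFdef, map_neg]
      rw [hAinv₂]
      exact neg_add_cancel _
  -- the scalarized integrals
  have hR : ∀ q : EuclideanSpace ℝ (Fin dθ), ∀ μ ∈ M,
      ∫ p, ⟪q, Ainv (m2 p)⟫ ∂μ = -⟪q, F μ⟫ := by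
    intro q μ hμ
    haveI := hμ.1
    have hI : Integrable (fun p => Ainv (m2 p)) μ :=
      LemB2.integrable_cont (Ainv.continuous.comp hm2) μ
    rw [integral_inner hI q, ContinuousLinearMap.integral_comp_comm Ainv (hIm2 μ inferInstance)]
    simp only [hFdef, inner_neg_right, neg_neg]
  have hRset : ∀ q : EuclideanSpace ℝ (Fin dθ),
      {r : ℝ | ∃ μ ∈ M, r = ∫ p, ⟪q, Ainv (m2 p)⟫ ∂μ} = (fun s => -⟪q, s⟫) '' S := by
    intro q
    ext r
    constructor
    · rintro ⟨μ, hμ, rfl⟩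
      exact ⟨F μ, ⟨μ, hμ, rfl⟩, (hR q μ hμ).symm⟩
    · rintro ⟨s, ⟨μ, hμ, rfl⟩, rfl⟩
      exact ⟨μ, hμ, (hR q μ hμ).symm⟩
  have hRbdd : ∀ q : EuclideanSpace ℝ (Fin dθ), ‖q‖ = 1 →
      BddBelow ((fun s => -⟪q, s⟫) '' S) := by
    intro q hq
    refine ⟨-(‖Ainv‖ * ‖fC‖), ?_⟩
    rintro r ⟨s, hs, rfl⟩
    have h1 : ⟪q, s⟫ ≤ ‖q‖ * ‖s‖ := real_inner_le_norm q s
    have h2 := hFb s hs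
    rw [hq, one_mul] at h1
    exact neg_le_neg (h1.trans h2)
  -- convexity
  have hSconv : Convex ℝ S := by
    rintro s1 ⟨μa, hμa, rfl⟩ s2 ⟨μb, hμb, rfl⟩ a b ha hb hab
    haveI := hμa.1
    haveI := hμb.1
    set μc : Measure (Y1 × Y0 × X) := ENNReal.ofReal a • μa + ENNReal.ofReal b • μb with hμc
    have hsum1 : ENNReal.ofReal a + ENNReal.ofReal b = 1 := by
      rw [← ENNReal.ofReal_add ha hb, hab, ENNReal.ofReal_one]
    have hμcM : μc ∈ M := by
      refine ⟨?_, ?_, ?_⟩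
      · constructor
        simp only [hμc, Measure.coe_add, Pi.add_apply, Measure.coe_smul, Pi.smul_apply,
          smul_eq_mul]
        rw [measure_univ, measure_univ, mul_one, mul_one, hsum1]
      · rw [hμc, Measure.map_add _ _ (by fun_prop), Measure.map_smul, Measure.map_smul,
          hμa.2.1, hμb.2.1, ← add_smul, hsum1, one_smul]
      · rw [hμc, Measure.map_add _ _ (by fun_prop), Measure.map_smul, Measure.map_smul,
          hμa.2.2, hμb.2.2, ← add_smul, hsum1, one_smul]
    refine ⟨μc, hμcM, ?_⟩
    have hia : Integrable m2 (ENNReal.ofReal a • μa) :=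
      (hIm2 μa inferInstance).smul_measure ENNReal.ofReal_ne_top
    have hib : Integrable m2 (ENNReal.ofReal b • μb) :=
      (hIm2 μb inferInstance).smul_measure ENNReal.ofReal_ne_top
    have hsplit : ∫ p, m2 p ∂μc = a • ∫ p, m2 p ∂μa + b • ∫ p, m2 p ∂μb := by
      rw [hμc]
      rw [integral_add_measure hia hib, integral_smul_measure, integral_smul_measure,
        ENNReal.toReal_ofReal ha, ENNReal.toReal_ofReal hb]
    simp only [hFdef]
    rw [hsplit, map_add, ContinuousLinearMap.map_smul, ContinuousLinearMap.map_smul, neg_add, ← smul_neg, ← smul_neg]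
  -- closedness
  have hSclosed : IsClosed S := by
    refine isClosed_of_closure_subset (fun θ' hθ' => ?_)
    obtain ⟨xs, hxsS, hxs⟩ := mem_closure_iff_seq_limit.mp hθ'
    choose μk hμkM hμkF using hxsS
    set U := Ultrafilter.of (atTop : Filter ℕ) with hU
    obtain ⟨μ, hμprob, hμlim⟩ :=
      LemB2.exists_ultrafilter_limit_measure μk (fun n => (hμkM n).1) U
    haveI := hμprob
    have hproj1 : Measurable (fun p : Y1 × Y0 × X => (p.1, p.2.2)) := by fun_prop
    have hproj0 : Measurable (fun p : Y1 × Y0 × X => (p.2.1, p.2.2)) := by fun_prop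
    have hμM : μ ∈ M := by
      refine ⟨hμprob, ?_, ?_⟩
      · haveI : IsProbabilityMeasure (μ.map (fun p : Y1 × Y0 × X => (p.1, p.2.2))) :=
          Measure.isProbabilityMeasure_map hproj1.aemeasurable
        refine LemB2.measure_ext_of_integral (fun h => ?_)
        have e1 : ∫ y, h y ∂(μ.map (fun p : Y1 × Y0 × X => (p.1, p.2.2)))
            = ∫ p : Y1 × Y0 × X, h (p.1, p.2.2) ∂μ :=
          integral_map hproj1.aemeasurable h.continuous.aestronglyMeasurable
        have e2 : ∀ n, ∫ p : Y1 × Y0 × X, h (p.1, p.2.2) ∂(μk n) = ∫ y, h y ∂μ1X := by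
          intro n
          haveI := (hμkM n).1
          rw [← (hμkM n).2.1, integral_map hproj1.aemeasurable
            h.continuous.aestronglyMeasurable]
        have e3 := hμlim (h.comp ⟨fun p : Y1 × Y0 × X => (p.1, p.2.2), by fun_prop⟩)
        have e4 : Tendsto (fun n => ∫ p : Y1 × Y0 × X, h (p.1, p.2.2) ∂(μk n))
            (U : Filter ℕ) (𝓝 (∫ y, h y ∂μ1X)) := by
          rw [show (fun n => ∫ p : Y1 × Y0 × X, h (p.1, p.2.2) ∂(μk n))
            = fun _ => ∫ y, h y ∂μ1X from funext e2]
          exact tendsto_const_nhds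
        rw [e1]
        exact tendsto_nhds_unique e3 e4
      · haveI : IsProbabilityMeasure (μ.map (fun p : Y1 × Y0 × X => (p.2.1, p.2.2))) :=
          Measure.isProbabilityMeasure_map hproj0.aemeasurable
        refine LemB2.measure_ext_of_integral (fun h => ?_)
        have e1 : ∫ y, h y ∂(μ.map (fun p : Y1 × Y0 × X => (p.2.1, p.2.2)))
            = ∫ p : Y1 × Y0 × X, h (p.2.1, p.2.2) ∂μ :=
          integral_map hproj0.aemeasurable h.continuous.aestronglyMeasurable
        have e2 : ∀ n, ∫ p : Y1 × Y0 × X, h (p.2.1, p.2.2) ∂(μk n) = ∫ y, h y ∂μ0X := by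
          intro n
          haveI := (hμkM n).1
          rw [← (hμkM n).2.2, integral_map hproj0.aemeasurable
            h.continuous.aestronglyMeasurable]
        have e3 := hμlim (h.comp ⟨fun p : Y1 × Y0 × X => (p.2.1, p.2.2), by fun_prop⟩)
        have e4 : Tendsto (fun n => ∫ p : Y1 × Y0 × X, h (p.2.1, p.2.2) ∂(μk n))
            (U : Filter ℕ) (𝓝 (∫ y, h y ∂μ0X)) := by
          rw [show (fun n => ∫ p : Y1 × Y0 × X, h (p.2.1, p.2.2) ∂(μk n))
            = fun _ => ∫ y, h y ∂μ0X from funext e2]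
          exact tendsto_const_nhds
        rw [e1]
        exact tendsto_nhds_unique e3 e4
    -- convergence of the vector integrals
    set b := EuclideanSpace.basisFun (Fin dθ) ℝ with hb
    have hexp : ∀ ρ : Measure (Y1 × Y0 × X), IsProbabilityMeasure ρ →
        ∫ p, m2 p ∂ρ = ∑ i : Fin dθ, (∫ p, ⟪b i, m2 p⟫ ∂ρ) • b i := by
      intro ρ hρ
      haveI := hρ
      have h1 : ∀ i : Fin dθ, ∫ p, ⟪b i, m2 p⟫ ∂ρ = ⟪b i, ∫ p, m2 p ∂ρ⟫ :=
        fun i => integral_inner (hIm2 ρ hρ) (b i)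
      calc ∫ p, m2 p ∂ρ = ∑ i : Fin dθ, ⟪b i, ∫ p, m2 p ∂ρ⟫ • b i := (b.sum_repr' _).symm
        _ = ∑ i : Fin dθ, (∫ p, ⟪b i, m2 p⟫ ∂ρ) • b i := by simp_rw [h1]
    have hvec : Tendsto (fun n => ∫ p, m2 p ∂(μk n)) (U : Filter ℕ)
        (𝓝 (∫ p, m2 p ∂μ)) := by
      rw [hexp μ hμprob]
      refine Tendsto.congr (fun n => (hexp (μk n) (hμkM n).1).symm) ?_
      refine tendsto_finset_sum _ (fun i _ => ?_)
      exact (hμlim ⟨fun p => ⟪b i, m2 p⟫, continuous_const.inner hm2⟩).smul_const (b i)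
    have hten : Tendsto (fun n => F (μk n)) (U : Filter ℕ) (𝓝 (F μ)) := by
      simp only [hFdef]
      exact ((Ainv.continuous.tendsto _).comp hvec).neg
    have hten2 : Tendsto (fun n => F (μk n)) (U : Filter ℕ) (𝓝 θ') := by
      have h1 : Tendsto xs (U : Filter ℕ) (𝓝 θ') := hxs.mono_left (Ultrafilter.of_le _)
      exact h1.congr fun n => (hμkF n).symm
    exact ⟨μ, hμM, tendsto_nhds_unique hten hten2⟩
  -- final equality of the two sets
  ext θ
  simp only [Set.mem_setOf_eq]
  constructor
  · rintro ⟨hθΘ, μ, hμ, h0⟩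
    refine ⟨hθΘ, fun q hq => ?_⟩
    have hθF : θ = F μ := (hmem μ hμ θ).mp h0
    have hmemr : -⟪q, θ⟫ ∈ {r : ℝ | ∃ μ' ∈ M, r = ∫ p, ⟪q, Ainv (m2 p)⟫ ∂μ'} := by
      rw [hRset q]
      exact ⟨F μ, ⟨μ, hμ, rfl⟩, by rw [hθF]⟩
    have h1 : sInf {r : ℝ | ∃ μ' ∈ M, r = ∫ p, ⟪q, Ainv (m2 p)⟫ ∂μ'} ≤ -⟪q, θ⟫ :=
      csInf_le (by rw [hRset q]; exact hRbdd q hq) hmemr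
    linarith
  · rintro ⟨hθΘ, hq⟩
    refine ⟨hθΘ, ?_⟩
    have hθS : θ ∈ S := by
      by_contra hθS
      obtain ⟨f, u, hfu1, hfu2⟩ := geometric_hahn_banach_closed_point hSconv hSclosed hθS
      set v := (InnerProductSpace.toDual ℝ (EuclideanSpace ℝ (Fin dθ))).symm f with hv
      have hvx : ∀ x, ⟪v, x⟫ = f x := fun x => InnerProductSpace.toDual_symm_apply
      have hv0 : v ≠ 0 := by
        intro h0
        obtain ⟨s0, hs0⟩ := hSne
        have h1 := hvx s0
        have h2 := hvx θ
        rw [h0, inner_zero_left] at h1 h2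
        have h3 := hfu1 s0 hs0
        rw [← h1] at h3
        rw [← h2] at hfu2
        linarith
      set q := ‖v‖⁻¹ • v with hqdef
      have hq1 : ‖q‖ = 1 := norm_smul_inv_norm hv0
      have hqx : ∀ x, ⟪q, x⟫ = ‖v‖⁻¹ * f x := fun x => by
        rw [hqdef, real_inner_smul_left, hvx]
      have hvpos : 0 < ‖v‖⁻¹ := by
        have := norm_pos_iff.mpr hv0
        positivity
      have hlow : ∀ r ∈ {r : ℝ | ∃ μ' ∈ M, r = ∫ p, ⟪q, Ainv (m2 p)⟫ ∂μ'},
          -(‖v‖⁻¹ * u) ≤ r := by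
        rw [hRset q]
        rintro r ⟨s, hs, rfl⟩
        have h1 := hfu1 s hs
        have h2 : ⟪q, s⟫ ≤ ‖v‖⁻¹ * u := by
          rw [hqx]
          exact mul_le_mul_of_nonneg_left h1.le hvpos.le
        linarith
      have hne : {r : ℝ | ∃ μ' ∈ M, r = ∫ p, ⟪q, Ainv (m2 p)⟫ ∂μ'}.Nonempty := by
        rw [hRset q]
        exact hSne.image _
      have hsInf : -(‖v‖⁻¹ * u) ≤ sInf {r : ℝ | ∃ μ' ∈ M, r = ∫ p, ⟪q, Ainv (m2 p)⟫ ∂μ'} :=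
        le_csInf hne hlow
      have hcontr := hq q hq1
      have hgt : ‖v‖⁻¹ * u < ⟪q, θ⟫ := by
        rw [hqx]
        exact mul_lt_mul_of_pos_left hfu2 hvpos
      linarith
    obtain ⟨μ, hμ, hFμ⟩ := hθS
    exact ⟨μ, hμ, (hmem μ hμ θ).mpr hFμ.symm⟩
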